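/- Let n ≥ 2 and let D be any wire diagram on n wires. Then every saturated chain from D to 1̂ in P_n^* that contains a cover relation labeled (j,i) with j > i has a descent, i.e., has consecutive labels λ(x,y) >λ λ(y,z) for some length-two subchain x ⋖ y ⋖ z. -/

import Mathlib

open Equiv Finset

/-- A candidate wire diagram: a permutation of the `2 n` endpoint positions. -/
abbrev WDperm (n : ℕ) := Equiv.Perm (Fin (2 * n))

/-- `σ` is a wire diagram on `n` wires: a fixed-point-free involution of the `2 n` positions. -/
def IsWD {n : ℕ} (σ : WDperm n) : Prop := (∀ x, σ (σ x) = x) ∧ ∀ x, σ x ≠ x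

instance IsWD.decPred {n : ℕ} : DecidablePred (@IsWD n) := fun σ => by
  unfold IsWD; infer_instance

/-- Positions `a < c` are first endpoints of a pair of crossing wires `{a, σ a}`, `{c, σ c}`,
i.e. `a < c < σ a < σ c`. -/
def IsCrossing {n : ℕ} (σ : WDperm n) (a c : Fin (2 * n)) : Prop :=
  a < c ∧ c < σ a ∧ σ a < σ c

instance IsCrossing.dec {n : ℕ} (σ : WDperm n) (a c : Fin (2 * n)) :
    Decidable (IsCrossing σ a c) := by unfold IsCrossing; infer_instance

/-- The number `c(σ)` of crossings of `σ`. -/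
def ncross {n : ℕ} (σ : WDperm n) : ℕ :=
  (Finset.univ.filter (fun p : Fin (2 * n) × Fin (2 * n) => IsCrossing σ p.1 p.2)).card

/-- The nesting uncrossing of the crossing `{a, σ a}, {c, σ c}` (with `a < c < σ a < σ c`):
replace the pairs `{a,b},{c,d}` by `{a,d},{b,c}` where `b = σ a`, `d = σ c`. -/
def nestU {n : ℕ} (σ : WDperm n) (a c : Fin (2 * n)) : WDperm n :=
  Equiv.swap (σ a) (σ c) * σ * Equiv.swap (σ a) (σ c)

/-- The disjoint uncrossing: replace the pairs `{a,b},{c,d}` by `{a,c},{b,d}`. -/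
def disjU {n : ℕ} (σ : WDperm n) (a c : Fin (2 * n)) : WDperm n :=
  Equiv.swap (σ a) c * σ * Equiv.swap (σ a) c

/-- `τ` is obtained from `σ` by a nesting uncrossing of some crossing of `σ`. -/
def IsNestStep {n : ℕ} (σ τ : WDperm n) : Prop := ∃ a c, IsCrossing σ a c ∧ τ = nestU σ a c

/-- `τ` is obtained from `σ` by a disjoint uncrossing of some crossing of `σ`. -/
def IsDisjStep {n : ℕ} (σ τ : WDperm n) : Prop := ∃ a c, IsCrossing σ a c ∧ τ = disjU σ a c

/-- `τ` is obtained from `σ` by an uncrossing step that decreases the crossing number by one. -/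
def UncCov {n : ℕ} (σ τ : WDperm n) : Prop :=
  (IsNestStep σ τ ∨ IsDisjStep σ τ) ∧ ncross τ + 1 = ncross σ

/-- The dual uncrossing poset `P_n^*`: wire diagrams together with a top element `none = 1̂`
(the adjoined element `0̂` of `P_n`). -/
abbrev PStar (n : ℕ) := Option {σ : WDperm n // IsWD σ}

/-- The covering relation of `P_n^*`. -/
def Cov {n : ℕ} : PStar n → PStar n → Prop
  | some σ, some τ => UncCov σ.1 τ.1
  | some σ, none => ncross σ.1 = 0
  | none, _ => False

/-- The partial order of `P_n^*`: reflexive-transitive closure of the covering relation. -/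
def ple {n : ℕ} : PStar n → PStar n → Prop := Relation.ReflTransGen Cov

/-- The (0-indexed) name `w(σ)(x)` of the wire through position `x`: the number of wires whose
first endpoint is strictly smaller than the first endpoint of the wire through `x`. -/
def word {n : ℕ} (σ : WDperm n) (x : Fin (2 * n)) : ℕ :=
  (Finset.univ.filter (fun a : Fin (2 * n) => a < σ a ∧ a < min x (σ x))).card

/-- The start set `S(σ)`: the set of first endpoints of wires of `σ`. -/
def startSet {n : ℕ} (σ : WDperm n) : Finset (Fin (2 * n)) :=
  Finset.univ.filter (fun a => a < σ a)

/-- The noncrossing pair set `N(σ)` (on 0-indexed wire names): `(i, j)` with `i < j` for each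
nested pair of wires `i < j`, and `(j, i)` for each disjoint pair of wires `i < j`. -/
def NPairs {n : ℕ} (σ : WDperm n) : Set (ℕ × ℕ) :=
  {p | ∃ a c : Fin (2 * n), a < σ a ∧ c < σ c ∧ a < c ∧
        ((σ c < σ a ∧ p = (word σ a, word σ c)) ∨ (σ a < c ∧ p = (word σ c, word σ a)))}

/-- Lexicographic comparison of finsets via their increasing enumerations. -/
def finsetLexLE {m : ℕ} (A B : Finset (Fin m)) : Prop :=
  A = B ∨ List.Lex (· < ·) (A.sort (· ≤ ·)) (B.sort (· ≤ ·))

/-- Labels of the edge labeling: ordered pairs of (0-indexed) wire names, and a label `L`. -/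
inductive Lbl where
  | pair : ℕ → ℕ → Lbl
  | L : Lbl
deriving DecidableEq

/-- The total order `<λ` on labels. -/
def lblLT : Lbl → Lbl → Prop
  | .pair i j, .pair i' j' =>
      if i < j then (if i' < j' then i < i' ∨ (i = i' ∧ j < j') else True)
      else (if i' < j' then False else (j' < j ∨ (j = j' ∧ i' < i)))
  | .pair i j, .L => i < j
  | .L, .pair r s => s < r
  | .L, .L => False

/-- `≤λ` on labels. -/
def lblLE (p q : Lbl) : Prop := p = q ∨ lblLT p q

/-- The sorted list of positions where `σ` and `τ` differ. -/
def diffList {n : ℕ} (σ τ : WDperm n) : List (Fin (2 * n)) :=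
  (Finset.univ.filter (fun x => σ x ≠ τ x)).sort (· ≤ ·)

/-- The edge labeling `λ` of `P_n^*`: an uncrossing of the crossing formed by wires `k < m`
of the lower diagram gets label `(k, m)` if it is the nesting uncrossing and `(m, k)` if it is
the disjoint uncrossing; covers of the top element `1̂ = none` get the label `L`. -/
def lbl {n : ℕ} : PStar n → PStar n → Lbl
  | some σ, some τ =>
      match (diffList σ.1 τ.1)[0]?, (diffList σ.1 τ.1)[1]? with
      | some a, some c =>
          if τ.1 a = σ.1 c then Lbl.pair (word σ.1 a) (word σ.1 c)
          else Lbl.pair (word σ.1 c) (word σ.1 a)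
      | _, _ => Lbl.L
  | _, _ => Lbl.L

/-- `c` is a saturated chain from `u` to `v` in `P_n^*`. -/
def SatChain {n : ℕ} (c : List (PStar n)) (u v : PStar n) : Prop :=
  c.Chain' Cov ∧ c.head? = some u ∧ c.getLast? = some v

/-- The label sequence of a saturated chain. -/
def chainLabels {n : ℕ} (c : List (PStar n)) : List Lbl := c.zipWith lbl c.tail

/-- Lexicographic order on pairs of labels. -/
def pairLexLT (p q : Lbl × Lbl) : Prop := lblLT p.1 q.1 ∨ (p.1 = q.1 ∧ lblLT p.2 q.2)

/-- `x ⋖ y ⋖ z` is a topological ascent: its label pair is lexicographically strictly smaller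
than the label pair of every other saturated chain from `x` to `z`. -/
def TopAscent {n : ℕ} (x y z : PStar n) : Prop :=
  Cov x y ∧ Cov y z ∧ ∀ y' : PStar n, Cov x y' → Cov y' z → y' ≠ y →
    pairLexLT (lbl x y, lbl y z) (lbl x y', lbl y' z)

/-- `x ⋖ y ⋖ z` is a topological descent: a length-two chain that is not a topological ascent. -/
def TopDescent {n : ℕ} (x y z : PStar n) : Prop := Cov x y ∧ Cov y z ∧ ¬ TopAscent x y z

/-- Every length-two subchain of `c` is a topological ascent. -/
def AllTopAscents {n : ℕ} (c : List (PStar n)) : Prop :=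
  ∀ x y z : PStar n, [x, y, z] <:+: c → TopAscent x y z

/-- The number of inversions of a permutation. -/
def numInv {n : ℕ} (π : Equiv.Perm (Fin n)) : ℕ :=
  (Finset.univ.filter (fun p : Fin n × Fin n => p.1 < p.2 ∧ π p.2 < π p.1)).card

/-- One step of the Bruhat order: left multiplication by a transposition raising `inv` by one. -/
def BruhatStep {n : ℕ} (u v : Equiv.Perm (Fin n)) : Prop :=
  (∃ a b : Fin n, a ≠ b ∧ v = Equiv.swap a b * u) ∧ numInv v = numInv u + 1

/-- The Bruhat order on `S_n`. -/
def BruhatLE {n : ℕ} : Equiv.Perm (Fin n) → Equiv.Perm (Fin n) → Prop :=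
  Relation.ReflTransGen BruhatStep

/-- The set of second endpoints of wires of `σ`. -/
def secondEnds {n : ℕ} (σ : WDperm n) : Finset (Fin (2 * n)) :=
  Finset.univ.filter (fun b => σ b < b)

/-- The wire name at the `t`-th (0-indexed) second endpoint. -/
def piVal {n : ℕ} (σ : WDperm n) (t : ℕ) : ℕ :=
  (((secondEnds σ).sort (· ≤ ·))[t]?).elim 0 (word σ)

open Classical in
/-- The permutation `π(σ) ∈ S_n` reading the wire names at the second endpoints of `σ` in
increasing order of position. -/
noncomputable def piPerm {n : ℕ} (σ : WDperm n) : Equiv.Perm (Fin n) :=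
  if h : Function.Bijective (fun t : Fin n =>
      if ht : piVal σ (t : ℕ) < n then (⟨piVal σ (t : ℕ), ht⟩ : Fin n) else t)
  then Equiv.ofBijective _ h else 1

/-- Apply to the crossing at `(a, c)` the nesting (`nest = true`) or disjoint (`nest = false`)
uncrossing. -/
def uncrossAt {n : ℕ} (σ : WDperm n) (a c : Fin (2 * n)) (nest : Bool) : WDperm n :=
  if nest then nestU σ a c else disjU σ a c

section Aux

variable {n : ℕ}

lemma word_lt_word (σ : WDperm n) {a c : Fin (2 * n)}
    (ha : a < σ a) (hc : c < σ c) (hac : a < c) : word σ a < word σ c := by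
  unfold word
  have hma : min a (σ a) = a := min_eq_left ha.le
  have hmc : min c (σ c) = c := min_eq_left hc.le
  rw [hma, hmc]
  apply Finset.card_lt_card
  constructor
  · intro t ht
    simp only [Finset.mem_filter, Finset.mem_univ, true_and] at *
    exact ⟨ht.1, ht.2.trans hac⟩
  · intro hsub
    have := hsub (by simp [ha, hac] : a ∈ Finset.univ.filter (fun t => t < σ t ∧ t < c))
    simp at this

lemma diffList_uncross (σ : WDperm n) (hσ : ∀ x, σ (σ x) = x)
    {a c : Fin (2 * n)} (hcr : IsCrossing σ a c) (τ : WDperm n)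
    (hτ : τ = nestU σ a c ∨ τ = disjU σ a c) :
    diffList σ τ = [a, c, σ a, σ c] ∧ (τ = nestU σ a c → τ a = σ c) ∧
      (τ = disjU σ a c → τ a = c) := by
  obtain ⟨hac, hcb, hbd⟩ := hcr
  have hab : a < σ a := hac.trans hcb
  have hcd : c < σ c := hcb.trans hbd
  have had : a < σ c := hab.trans hbd
  have hinj := σ.injective
  -- value facts
  have hna : nestU σ a c a = σ c := by
    simp [nestU, Equiv.Perm.mul_apply,
      Equiv.swap_apply_of_ne_of_ne hab.ne had.ne, Equiv.swap_apply_left]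
  have hnc : nestU σ a c c = σ a := by
    simp [nestU, Equiv.Perm.mul_apply,
      Equiv.swap_apply_of_ne_of_ne hcb.ne hcd.ne, Equiv.swap_apply_right]
  have hnb : nestU σ a c (σ a) = c := by
    simp [nestU, Equiv.Perm.mul_apply, Equiv.swap_apply_left, hσ,
      Equiv.swap_apply_of_ne_of_ne hcb.ne hcd.ne]
  have hnd : nestU σ a c (σ c) = a := by
    simp [nestU, Equiv.Perm.mul_apply, Equiv.swap_apply_right, hσ,
      Equiv.swap_apply_of_ne_of_ne hab.ne had.ne]
  have hda : disjU σ a c a = c := by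
    simp [disjU, Equiv.Perm.mul_apply,
      Equiv.swap_apply_of_ne_of_ne hab.ne hac.ne, Equiv.swap_apply_left]
  have hdc : disjU σ a c c = a := by
    simp [disjU, Equiv.Perm.mul_apply, Equiv.swap_apply_right, hσ,
      Equiv.swap_apply_of_ne_of_ne hab.ne hac.ne]
  have hdb : disjU σ a c (σ a) = σ c := by
    simp [disjU, Equiv.Perm.mul_apply, Equiv.swap_apply_left,
      Equiv.swap_apply_of_ne_of_ne hbd.ne' hcd.ne']
  have hdd : disjU σ a c (σ c) = σ a := by
    simp [disjU, Equiv.Perm.mul_apply, hσ,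
      Equiv.swap_apply_of_ne_of_ne hbd.ne' hcd.ne', Equiv.swap_apply_right]
  have hgen : ∀ x, x ≠ a → x ≠ c → x ≠ σ a → x ≠ σ c → τ x = σ x := by
    intro x hxa hxc hxb hxd
    have h1 : σ x ≠ σ a := fun h => hxa (hinj h)
    have h2 : σ x ≠ σ c := fun h => hxc (hinj h)
    have h3 : σ x ≠ c := fun h => hxd (by rw [← hσ x, h])
    rcases hτ with rfl | rfl
    · simp [nestU, Equiv.Perm.mul_apply, Equiv.swap_apply_of_ne_of_ne hxb hxd,
        Equiv.swap_apply_of_ne_of_ne h1 h2]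
    · simp [disjU, Equiv.Perm.mul_apply, Equiv.swap_apply_of_ne_of_ne hxb hxc,
        Equiv.swap_apply_of_ne_of_ne h1 h3]
  have hTa : τ a ≠ σ a := by
    rcases hτ with rfl | rfl
    · rw [hna]; exact hbd.ne'
    · rw [hda]; exact hcb.ne
  have hTc : τ c ≠ σ c := by
    rcases hτ with rfl | rfl
    · rw [hnc]; exact hbd.ne
    · rw [hdc]; exact had.ne
  have hTb : τ (σ a) ≠ σ (σ a) := by
    rw [hσ]
    rcases hτ with rfl | rfl
    · rw [hnb]; exact hac.ne'
    · rw [hdb]; exact had.ne'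
  have hTd : τ (σ c) ≠ σ (σ c) := by
    rw [hσ]
    rcases hτ with rfl | rfl
    · rw [hnd]; exact hac.ne
    · rw [hdd]; exact hcb.ne'
  have hset : Finset.univ.filter (fun x => σ x ≠ τ x) =
      insert a (insert c (insert (σ a) ({σ c} : Finset (Fin (2 * n))))) := by
    ext x
    simp only [Finset.mem_filter, Finset.mem_univ, true_and, Finset.mem_insert,
      Finset.mem_singleton]
    constructor
    · intro hx
      by_contra hcon
      push_neg at hcon
      exact hx ((hgen x hcon.1 hcon.2.1 hcon.2.2.1 hcon.2.2.2).symm)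
    · rintro (rfl | rfl | rfl | rfl)
      · exact fun h => hTa h.symm
      · exact fun h => hTc h.symm
      · exact fun h => hTb h.symm
      · exact fun h => hTd h.symm
  refine ⟨?_, fun h => by rw [h]; exact hna, fun h => by rw [h]; exact hda⟩
  unfold diffList
  rw [hset]
  rw [Finset.sort_insert (· ≤ ·) ?h1 ?h2, Finset.sort_insert (· ≤ ·) ?h3 ?h4,
    Finset.sort_insert (· ≤ ·) ?h5 ?h6, Finset.sort_singleton]
  case h1 =>
    intro y hy
    simp only [Finset.mem_insert, Finset.mem_singleton] at hy
    rcases hy with rfl | rfl | rfl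
    exacts [hac.le, hab.le, had.le]
  case h2 => simp [hac.ne, hab.ne, had.ne]
  case h3 =>
    intro y hy
    simp only [Finset.mem_insert, Finset.mem_singleton] at hy
    rcases hy with rfl | rfl
    exacts [hcb.le, hcd.le]
  case h4 => simp [hcb.ne, hcd.ne]
  case h5 =>
    intro y hy
    simp only [Finset.mem_singleton] at hy
    rcases hy with rfl
    exact hbd.le
  case h6 => simp [hbd.ne]

lemma cov_label {σ τ : {σ : WDperm n // IsWD σ}} (h : Cov (some σ) (some τ)) :
    ∃ k m : ℕ, k < m ∧ (lbl (some σ) (some τ) = Lbl.pair k m ∨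
      lbl (some σ) (some τ) = Lbl.pair m k) := by
  obtain ⟨hstep, -⟩ := h
  have hex : ∃ a c, IsCrossing σ.1 a c ∧
      (τ.1 = nestU σ.1 a c ∨ τ.1 = disjU σ.1 a c) := by
    rcases hstep with ⟨a, c, h1, h2⟩ | ⟨a, c, h1, h2⟩
    · exact ⟨a, c, h1, Or.inl h2⟩
    · exact ⟨a, c, h1, Or.inr h2⟩
  obtain ⟨a, c, hcr, hτ⟩ := hex
  obtain ⟨hdl, hval1, hval2⟩ := diffList_uncross σ.1 σ.2.1 hcr τ.1 hτ
  have hab : a < σ.1 a := hcr.1.trans hcr.2.1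
  have hcd : c < σ.1 c := hcr.2.1.trans hcr.2.2
  have hword : word σ.1 a < word σ.1 c := word_lt_word σ.1 hab hcd hcr.1
  refine ⟨word σ.1 a, word σ.1 c, hword, ?_⟩
  have hlbl : lbl (some σ) (some τ) =
      (if τ.1 a = σ.1 c then Lbl.pair (word σ.1 a) (word σ.1 c)
       else Lbl.pair (word σ.1 c) (word σ.1 a)) := by
    simp only [lbl, hdl]
    rfl
  rcases hτ with hτ | hτ
  · left; rw [hlbl, if_pos (hval1 hτ)]
  · right
    rw [hlbl, if_neg]
    rw [hval2 hτ]
    exact (hcr.2.1.trans hcr.2.2).ne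

lemma descent_aux (c : List (PStar n)) (hch : c.Chain' Cov)
    (hlast : c.getLast? = some none) :
    ∀ l₂ l₁ : List (PStar n), ∀ x y : PStar n, l₁ ++ [x, y] ++ l₂ = c →
      lblLT Lbl.L (lbl x y) →
      ∃ a b d : PStar n, [a, b, d] <:+: c ∧ lblLT (lbl b d) (lbl a b) := by
  intro l₂
  induction l₂ with
  | nil =>
    intro l₁ x y heq hbig
    exfalso
    have hy : c.getLast? = some y := by
      rw [← heq]
      have : l₁ ++ [x, y] ++ ([] : List (PStar n)) = (l₁ ++ [x]) ++ [y] := by simp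
      rw [this, List.getLast?_concat]
    rw [hlast] at hy
    have hy' : y = none := by injection hy with h; exact h.symm
    subst hy'
    have hL : lbl x none = Lbl.L := by cases x <;> rfl
    rw [hL] at hbig
    exact hbig
  | cons z l₂ ih =>
    intro l₁ x y heq hbig
    have hinf : [x, y, z] <:+: c := ⟨l₁, l₂, by rw [← heq]; simp⟩
    by_cases hdesc : lblLT (lbl y z) (lbl x y)
    · exact ⟨x, y, z, hinf, hdesc⟩
    obtain ⟨r, s, hsr, hxy⟩ : ∃ r s, s < r ∧ lbl x y = Lbl.pair r s := by
      cases hxy' : lbl x y with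
      | L => rw [hxy'] at hbig; exact absurd hbig (by simp [lblLT])
      | pair r s =>
        refine ⟨r, s, ?_, rfl⟩
        rw [hxy'] at hbig
        simpa [lblLT] using hbig
    have hch3 : List.Chain' Cov [x, y, z] := hch.infix hinf
    change List.IsChain Cov [x, y, z] at hch3
    rw [List.isChain_cons_cons, List.isChain_cons_cons] at hch3
    obtain ⟨hcxy, hcyz, -⟩ := hch3
    cases z with
    | none =>
      exfalso
      apply hdesc
      have : lbl y none = Lbl.L := by cases y <;> rfl
      rw [this, hxy]
      simpa [lblLT] using hsr
    | some τz =>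
      cases y with
      | none => exact absurd hcyz (by simp [Cov])
      | some τy =>
        obtain ⟨k, m, hkm, hor⟩ := cov_label hcyz
        rcases hor with hlz | hlz
        · exfalso
          apply hdesc
          rw [hlz, hxy]
          simp [lblLT, hkm, Nat.lt_asymm hsr]
        · have hbig' : lblLT Lbl.L (lbl (some τy) (some τz)) := by
            rw [hlz]; simpa [lblLT] using hkm
          exact ih (l₁ ++ [x]) (some τy) (some τz) (by rw [← heq]; simp) hbig'

end Aux

/-- Every saturated chain from a wire diagram `D` to `1̂` in `P_n^*` containing a cover relation
labeled `(j, i)` with `j > i` has a descent. -/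
theorem chain_with_disjoint_label_has_descent (n : ℕ) (hn : 2 ≤ n)
    (D : {σ : WDperm n // IsWD σ}) (c : List (PStar n))
    (hc : SatChain c (some D) none)
    (i j : ℕ) (hij : i < j) (x y : PStar n)
    (hxy : [x, y] <:+: c) (hl : lbl x y = Lbl.pair j i) :
    ∃ a b d : PStar n, [a, b, d] <:+: c ∧ lblLT (lbl b d) (lbl a b) := by
  obtain ⟨hch, hhead, hlast⟩ := hc
  obtain ⟨l₁, l₂, heq⟩ := hxy
  have hbig : lblLT Lbl.L (lbl x y) := by rw [hl]; simpa [lblLT] using hij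
  exact descent_aux c hch hlast l₂ l₁ x y heq hbig
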